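/- Gap Lemma: Let C¹ and C² be two compact sets in ℝ^d, with systems of balls {S¹_I} and {S²_L} respectively, and fix r ∈ (0, 1/2). Assume: (i) τ(C¹, {S¹_I}) · τ(C², {S²_L}) ≥ 1/(1 − 2r)²; (ii) C¹ ∩ (1 − 2r)S²_∅ ≠ ∅; (iii) rad(S¹_∅) ≥ r · rad(S²_∅) and rad(S²_∅) ≥ r · rad(S¹_∅); (iv) {S¹_I} and {S²_L} are r-uniformly dense. Then C¹ ∩ C² ≠ ∅. -/

import Mathlib

open Metric Set Filter
open scoped ENNReal

/-- A system of balls in a normed space: closed balls indexed by finite words of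
natural numbers, each ball containing its finitely many (at least one) children,
with radii tending to zero along infinite words. -/
structure BallSystem (E : Type*) [NormedAddCommGroup E] where
  center : List ℕ → E
  radius : List ℕ → ℝ
  numChildren : List ℕ → ℕ
  radius_pos : ∀ I, 0 < radius I
  numChildren_pos : ∀ I, 0 < numChildren I
  child_subset : ∀ I, ∀ i < numChildren I,
    Metric.closedBall (center (I ++ [i])) (radius (I ++ [i])) ⊆
      Metric.closedBall (center I) (radius I)
  radius_tendsto : ∀ ω : ℕ → ℕ,
    Filter.Tendsto (fun n => radius (List.ofFn fun k : Fin n => ω k)) Filter.atTop (nhds 0)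

namespace BallSystem

variable {E : Type*} [NormedAddCommGroup E]

/-- The ball with index `I`. -/
def ball (B : BallSystem E) (I : List ℕ) : Set E :=
  Metric.closedBall (B.center I) (B.radius I)

/-- A word is valid if each letter indexes an actual child of the preceding prefix. -/
def valid (B : BallSystem E) (I : List ℕ) : Prop :=
  ∀ n : Fin I.length, I.get n < B.numChildren (I.take n.1)

/-- `B` is a system of balls for the set `C`: `C = ⋂_n ⋃_{|I| = n} S_I`. -/
def IsSystemFor (B : BallSystem E) (C : Set E) : Prop :=
  C = ⋂ n : ℕ, ⋃ I ∈ {I : List ℕ | B.valid I ∧ I.length = n}, B.ball I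

/-- `h_I := max_{x ∈ S_I} dist (x, C)`. -/
noncomputable def h (B : BallSystem E) (C : Set E) (I : List ℕ) : ℝ :=
  ⨆ x ∈ B.ball I, infDist x C

/-- The minimum of the radii of the children of `S_I`. -/
noncomputable def minChildRadius (B : BallSystem E) (I : List ℕ) : ℝ :=
  ⨅ i : Fin (B.numChildren I), B.radius (I ++ [i.1])

/-- The thickness of `C` associated to the system of balls `B`, with values in `[0, ∞]`
(the ratio `min_i rad S_{I,i} / h_I` being interpreted as `∞` when `h_I = 0`). -/
noncomputable def thickness (B : BallSystem E) (C : Set E) : ℝ≥0∞ :=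
  ⨅ I : {I : List ℕ // B.valid I},
    ENNReal.ofReal (B.minChildRadius I.1) / ENNReal.ofReal (B.h C I.1)

/-- The system is `r`-uniformly dense: every closed ball contained in `S_I` with radius
at least `r · rad S_I` contains a child of `S_I`. -/
def UniformlyDense (B : BallSystem E) (r : ℝ) : Prop :=
  ∀ I, B.valid I → ∀ (x : E) (ρ : ℝ), Metric.closedBall x ρ ⊆ B.ball I →
    r * B.radius I ≤ ρ → ∃ i < B.numChildren I, B.ball (I ++ [i]) ⊆ Metric.closedBall x ρ

end BallSystem

section AuxGapLemma

set_option linter.unusedSectionVars false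
set_option linter.unusedVariables false

namespace BallSystem

variable {E : Type*} [NormedAddCommGroup E]


theorem valid_nil (B : BallSystem E) : B.valid [] := by
  intro n; exact absurd n.2 (by simp)

theorem center_mem_ball (B : BallSystem E) (I : List ℕ) : B.center I ∈ B.ball I :=
  mem_closedBall_self (B.radius_pos I).le

theorem valid_take {B : BallSystem E} {I : List ℕ} (hv : B.valid I) (k : ℕ) :
    B.valid (I.take k) := by
  intro n
  have hlen : (I.take k).length ≤ I.length := by
    simp [List.length_take]
  have hn : (n : ℕ) < I.length := lt_of_lt_of_le n.2 hlen
  have hnk : (n : ℕ) < k := by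
    have := n.2; simp [List.length_take] at this; omega
  have hget : (I.take k).get n = I.get ⟨n, hn⟩ := by
    simp [List.get_eq_getElem, List.getElem_take]
  have htake : (I.take k).take (n : ℕ) = I.take (n : ℕ) := by
    rw [List.take_take]; congr 1; omega
  rw [hget, htake]
  exact hv ⟨n, hn⟩

theorem valid_append {B : BallSystem E} {I : List ℕ} {i : ℕ} (hv : B.valid I)
    (hi : i < B.numChildren I) : B.valid (I ++ [i]) := by
  intro n
  have hlen : (I ++ [i]).length = I.length + 1 := by simp
  have hn : (n : ℕ) < I.length + 1 := by rw [← hlen]; exact n.2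
  by_cases hcase : (n : ℕ) < I.length
  · have hget : (I ++ [i]).get n = I.get ⟨n, hcase⟩ := by
      simp [List.get_eq_getElem, List.getElem_append_left hcase]
    have htake : (I ++ [i]).take (n : ℕ) = I.take (n : ℕ) := by
      exact List.take_append_of_le_length (le_of_lt hcase)
    rw [hget, htake]; exact hv ⟨n, hcase⟩
  · have hn' : (n : ℕ) = I.length := by omega
    have hget : (I ++ [i]).get n = i := by
      simp [List.get_eq_getElem, hn']
    have htake : (I ++ [i]).take (n : ℕ) = I := by
      rw [hn']; exact List.take_left
    rw [hget, htake]; exact hi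

theorem ball_take_subset {B : BallSystem E} {I : List ℕ} (hv : B.valid I) (k : ℕ) :
    B.ball I ⊆ B.ball (I.take k) := by
  have key : ∀ j, B.ball (I.take (k + j)) ⊆ B.ball (I.take k) := by
    intro j
    induction j with
    | zero => exact subset_rfl
    | succ j ih =>
      by_cases hcase : k + j < I.length
      · have htake : I.take (k + j + 1) = I.take (k + j) ++ [I.get ⟨k + j, hcase⟩] := by
          rw [List.take_succ]
          congr 1
          simp [List.getElem?_eq_getElem hcase]
        have hsub : B.ball (I.take (k + j + 1)) ⊆ B.ball (I.take (k + j)) := by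
          rw [htake]
          exact B.child_subset _ _ (hv ⟨k + j, hcase⟩)
        exact hsub.trans ih
      · have : I.take (k + j + 1) = I.take (k + j) := by
          rw [List.take_of_length_le (by omega), List.take_of_length_le (by omega)]
        show B.ball (I.take (k + j + 1)) ⊆ B.ball (I.take k)
        rw [this]; exact ih
  have hIlen : I.take (k + I.length) = I := List.take_of_length_le (by omega)
  have := key I.length
  rwa [hIlen] at this


theorem radius_le_of_closedBall_subset {E' : Type*} [NormedAddCommGroup E'] [NormedSpace ℝ E']
    [Nontrivial E'] {c₁ c₂ : E'} {ρ₁ ρ₂ : ℝ}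
    (h : Metric.closedBall c₁ ρ₁ ⊆ Metric.closedBall c₂ ρ₂) (h1 : 0 ≤ ρ₁) : ρ₁ ≤ ρ₂ := by
  obtain ⟨u, hu⟩ := exists_ne (0 : E')
  have hun : ‖u‖ ≠ 0 := norm_ne_zero_iff.2 hu
  set v := (ρ₁ / ‖u‖) • u with hv
  have hnv : ‖v‖ = ρ₁ := by
    rw [hv, norm_smul, norm_div, Real.norm_eq_abs, abs_of_nonneg h1, norm_norm,
      div_mul_cancel₀ _ hun]
  have hm1 : c₁ + v ∈ Metric.closedBall c₂ ρ₂ := by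
    apply h
    simp [mem_closedBall, dist_eq_norm, hnv]
  have hm2 : c₁ - v ∈ Metric.closedBall c₂ ρ₂ := by
    apply h
    simp [mem_closedBall, dist_eq_norm, hnv]
  have hd : dist (c₁ + v) (c₁ - v) = 2 * ρ₁ := by
    rw [dist_eq_norm]
    have : c₁ + v - (c₁ - v) = (2 : ℝ) • v := by module
    rw [this, norm_smul, hnv]
    simp
  have := dist_triangle (c₁ + v) c₂ (c₁ - v)
  rw [hd] at this
  have h1' := mem_closedBall.1 hm1
  have h2' := mem_closedBall.1 hm2
  rw [dist_comm c₂ (c₁ - v)] at this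
  linarith [h2']

variable [NormedSpace ℝ E]

theorem radius_take_le [Nontrivial E] {B : BallSystem E} {I : List ℕ} (hv : B.valid I) (k : ℕ) :
    B.radius I ≤ B.radius (I.take k) :=
  radius_le_of_closedBall_subset (ball_take_subset hv k) (B.radius_pos I).le

theorem radius_le_root [Nontrivial E] {B : BallSystem E} {I : List ℕ} (hv : B.valid I) :
    B.radius I ≤ B.radius [] := by
  have := radius_take_le hv 0
  simpa using this

theorem subset_root {B : BallSystem E} {C : Set E} (hS : B.IsSystemFor C) : C ⊆ B.ball [] := by
  intro x hx
  rw [hS] at hx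
  have h0 := Set.mem_iInter.1 hx 0
  simp only [Set.mem_iUnion, Set.mem_setOf_eq] at h0
  obtain ⟨I, ⟨hIv, hIl⟩, hxI⟩ := h0
  rwa [List.length_eq_zero_iff.1 hIl] at hxI

theorem h_nonneg (B : BallSystem E) (C : Set E) (I : List ℕ) : 0 ≤ B.h C I := by
  apply Real.iSup_nonneg
  intro x
  apply Real.iSup_nonneg
  intro _
  exact infDist_nonneg

theorem infDist_le_h {B : BallSystem E} {C : Set E} {I : List ℕ} {p : E} (hp : p ∈ B.ball I) :
    infDist p C ≤ B.h C I := by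
  have hbdd : BddAbove (Set.range fun x => ⨆ _ : x ∈ B.ball I, infDist x C) := by
    refine ⟨infDist (B.center I) C + B.radius I, ?_⟩
    rintro y ⟨x, rfl⟩
    apply Real.iSup_le
    · intro hx
      calc infDist x C ≤ infDist (B.center I) C + dist x (B.center I) :=
            infDist_le_infDist_add_dist
        _ ≤ infDist (B.center I) C + B.radius I := by
            have := mem_closedBall.1 hx; linarith
    · have := infDist_nonneg (s := C) (x := B.center I)
      have := (B.radius_pos I).le
      linarith
  have h1 : (⨆ _ : p ∈ B.ball I, infDist p C) ≤ B.h C I := le_ciSup hbdd p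
  haveI : Nonempty (p ∈ B.ball I) := ⟨hp⟩
  rwa [ciSup_const] at h1

theorem exists_dist_le_h {B : BallSystem E} {C : Set E} (hC : IsCompact C) (hne : C.Nonempty)
    {I : List ℕ} {p : E} (hp : p ∈ B.ball I) : ∃ q ∈ C, dist p q ≤ B.h C I := by
  obtain ⟨q, hq, hdq⟩ := hC.exists_infDist_eq_dist hne p
  exact ⟨q, hq, by rw [← hdq]; exact infDist_le_h hp⟩

theorem minChildRadius_pos (B : BallSystem E) (I : List ℕ) : 0 < B.minChildRadius I := by
  haveI : Nonempty (Fin (B.numChildren I)) := Fin.pos_iff_nonempty.1 (B.numChildren_pos I)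
  obtain ⟨i₀, hi₀⟩ := Finite.exists_min (fun i : Fin (B.numChildren I) => B.radius (I ++ [i.1]))
  have h1 : B.radius (I ++ [i₀.1]) ≤ B.minChildRadius I := le_ciInf hi₀
  exact lt_of_lt_of_le (B.radius_pos _) h1

theorem minChildRadius_le (B : BallSystem E) {I : List ℕ} {i : ℕ} (hi : i < B.numChildren I) :
    B.minChildRadius I ≤ B.radius (I ++ [i]) := by
  have hbdd : BddBelow (Set.range fun j : Fin (B.numChildren I) => B.radius (I ++ [j.1])) :=
    ⟨0, by rintro y ⟨j, rfl⟩; exact (B.radius_pos _).le⟩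
  exact ciInf_le hbdd ⟨i, hi⟩

theorem slide {c x : E} {ρ s : ℝ} (hρ : 0 < ρ) (hs0 : 0 ≤ s) (hsρ : s ≤ ρ)
    (hx : x ∈ Metric.closedBall c ρ) :
    ∃ z : E, Metric.closedBall z s ⊆ Metric.closedBall c ρ ∧ dist z x ≤ s := by
  have ht0 : 0 ≤ 1 - s / ρ := by
    have : s / ρ ≤ 1 := (div_le_one hρ).2 hsρ
    linarith
  refine ⟨c + (1 - s / ρ) • (x - c), ?_, ?_⟩
  · apply Metric.closedBall_subset_closedBall'
    have hd : dist (c + (1 - s / ρ) • (x - c)) c = (1 - s / ρ) * ‖x - c‖ := by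
      rw [dist_eq_norm]
      have : c + (1 - s / ρ) • (x - c) - c = (1 - s / ρ) • (x - c) := by module
      rw [this, norm_smul, Real.norm_eq_abs, abs_of_nonneg ht0]
    rw [hd]
    have hxc : ‖x - c‖ ≤ ρ := by rw [← dist_eq_norm]; exact mem_closedBall.1 hx
    have : (1 - s / ρ) * ‖x - c‖ ≤ (1 - s / ρ) * ρ := by
      exact mul_le_mul_of_nonneg_left hxc ht0
    have hcalc : (1 - s / ρ) * ρ = ρ - s := by field_simp
    linarith
  · have : c + (1 - s / ρ) • (x - c) - x = (-(s / ρ)) • (x - c) := by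
      have hρ' : (ρ : ℝ) ≠ 0 := ne_of_gt hρ
      rw [smul_sub, smul_sub]
      module
    rw [dist_eq_norm, this, norm_smul, Real.norm_eq_abs, abs_neg,
      abs_of_nonneg (div_nonneg hs0 hρ.le)]
    have hxc : ‖x - c‖ ≤ ρ := by rw [← dist_eq_norm]; exact mem_closedBall.1 hx
    have : s / ρ * ‖x - c‖ ≤ s / ρ * ρ := by
      exact mul_le_mul_of_nonneg_left hxc (div_nonneg hs0 hρ.le)
    have hcalc : s / ρ * ρ = s := by field_simp
    linarith


theorem exists_mem_inter_ball [CompleteSpace E] {B : BallSystem E} {C : Set E}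
    (hS : B.IsSystemFor C) {L : List ℕ} (hL : B.valid L) : ∃ q ∈ C, q ∈ B.ball L := by
  classical
  set ω : ℕ → ℕ := fun k => L.getD k 0 with hω
  set W : ℕ → List ℕ := fun n => List.ofFn (fun k : Fin n => ω k) with hW
  have hWlen : ∀ n, (W n).length = n := fun n => by simp [hW]
  have hWsucc : ∀ n, W (n + 1) = W n ++ [ω n] := by
    intro n
    simp only [hW]
    rw [List.ofFn_succ']
    simp [List.concat_eq_append]
  have hWtake : ∀ m n, m ≤ n → (W n).take m = W m := by
    intro m n hmn
    apply List.ext_getElem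
    · simp [hW]; omega
    · intro k h1 h2
      simp [hW, List.getElem_take]
  have hWL : W L.length = L := by
    apply List.ext_getElem
    · simp [hW]
    · intro k h1 h2
      simp only [hW, List.getElem_ofFn, hω]
      exact List.getD_eq_getElem L 0 h2
  have hletter : ∀ m, ω m < B.numChildren (W m) := by
    intro m
    by_cases hm : m < L.length
    · have hWm : W m = L.take m := by
        rw [← hWL, hWtake m L.length hm.le]
      have hωm : ω m = L.get ⟨m, hm⟩ := by
        simp only [hω, List.get_eq_getElem]
        exact List.getD_eq_getElem L 0 hm
      rw [hWm, hωm]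
      exact hL ⟨m, hm⟩
    · have h0 : ω m = 0 := by
        simp only [hω]
        exact List.getD_eq_default L 0 (by omega)
      rw [h0]; exact B.numChildren_pos (W m)
  have hvalid : ∀ n, B.valid (W n) := by
    intro n m
    have hm : (m : ℕ) < n := lt_of_lt_of_eq m.2 (hWlen n)
    have hget : (W n).get m = ω m := by
      simp [hW, List.get_eq_getElem]
    have htake : (W n).take (m : ℕ) = W m := hWtake m n hm.le
    rw [hget, htake]
    exact hletter m
  have hnest : ∀ n, B.ball (W (n + 1)) ⊆ B.ball (W n) := by
    intro n
    rw [hWsucc n]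
    exact B.child_subset (W n) (ω n) (hletter n)
  have hchain : ∀ n m, n ≤ m → B.ball (W m) ⊆ B.ball (W n) := by
    intro n m hnm
    induction m with
    | zero => have : n = 0 := by omega
              subst this; exact subset_rfl
    | succ m ih =>
      rcases Nat.lt_or_ge n (m + 1) with hlt | hge
      · exact (hnest m).trans (ih (by omega))
      · have : n = m + 1 := by omega
        subst this; exact subset_rfl
  set u : ℕ → E := fun n => B.center (W n) with hu
  have humem : ∀ n m, n ≤ m → u m ∈ B.ball (W n) := by
    intro n m hnm
    exact hchain n m hnm (center_mem_ball B (W m))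
  have hcauchy : CauchySeq u := by
    apply cauchySeq_of_le_tendsto_0 (fun n => 2 * B.radius (W n))
    · intro n m N hn hm
      have h1 := mem_closedBall.1 (humem N n hn)
      have h2 := mem_closedBall.1 (humem N m hm)
      calc dist (u n) (u m) ≤ dist (u n) (B.center (W N)) + dist (B.center (W N)) (u m) :=
            dist_triangle _ _ _
        _ ≤ B.radius (W N) + B.radius (W N) := by
            rw [dist_comm (B.center (W N)) (u m)]; exact add_le_add h1 h2
        _ = 2 * B.radius (W N) := by ring
    · have h0 := B.radius_tendsto ω
      have : (fun n => 2 * B.radius (W n)) = fun n => 2 * B.radius (List.ofFn fun k : Fin n => ω k) := rfl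
      rw [this]
      simpa using h0.const_mul (2 : ℝ)
  obtain ⟨q, hq⟩ := cauchySeq_tendsto_of_complete hcauchy
  have hqball : ∀ n, q ∈ B.ball (W n) := by
    intro n
    apply isClosed_closedBall.mem_of_tendsto hq
    filter_upwards [eventually_ge_atTop n] with m hm
    exact humem n m hm
  have hqC : q ∈ C := by
    rw [hS]
    apply Set.mem_iInter.2
    intro n
    simp only [Set.mem_iUnion, Set.mem_setOf_eq]
    exact ⟨W n, ⟨hvalid n, hWlen n⟩, hqball n⟩
  refine ⟨q, hqC, ?_⟩
  have := hqball L.length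
  rwa [hWL] at this


theorem exists_jump [Nontrivial E] {B : BallSystem E} {C : Set E} (hS : B.IsSystemFor C)
    {x : E} (hx : x ∈ C) {t : ℝ} (ht : 0 < t) (hroot : t ≤ B.radius []) :
    ∃ J j, B.valid J ∧ j < B.numChildren J ∧ x ∈ B.ball J ∧ x ∈ B.ball (J ++ [j]) ∧
      t ≤ B.radius J ∧ B.radius (J ++ [j]) < t := by
  classical
  have hlevel : ∀ n, ∃ W, B.valid W ∧ W.length = n ∧ x ∈ B.ball W := by
    intro n
    have hx' := hx
    rw [hS] at hx'
    have := Set.mem_iInter.1 hx' n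
    simp only [Set.mem_iUnion, Set.mem_setOf_eq] at this
    obtain ⟨W, ⟨h1, h2⟩, h3⟩ := this
    exact ⟨W, h1, h2, h3⟩
  have key : ∃ W, B.valid W ∧ x ∈ B.ball W ∧ B.radius W < t := by
    by_contra hkey
    push_neg at hkey
    set Fat : List ℕ → Prop := fun V => B.valid V ∧ x ∈ B.ball V with hFat
    set Good : List ℕ → Prop :=
      fun V => ∀ n, ∃ W, Fat W ∧ W.length = V.length + n ∧ V <+: W with hGood
    have good_fat : ∀ V, Good V → Fat V := by
      intro V hV
      obtain ⟨W, hWf, hWl, hWp⟩ := hV 0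
      have hEq : V = W := hWp.eq_of_length (by omega)
      rwa [hEq]
    have good_nil : Good [] := by
      intro n
      obtain ⟨W, h1, h2, h3⟩ := hlevel n
      exact ⟨W, ⟨h1, h3⟩, by simpa using h2, List.nil_prefix⟩
    have mono : ∀ V n₀, (¬ ∃ W, Fat W ∧ W.length = V.length + n₀ ∧ V <+: W) →
        ∀ m, n₀ ≤ m → ¬ ∃ W, Fat W ∧ W.length = V.length + m ∧ V <+: W := by
      intro V n₀ hno m hm hex
      obtain ⟨W, ⟨hWv, hWx⟩, hWl, hWp⟩ := hex
      apply hno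
      refine ⟨W.take (V.length + n₀), ⟨valid_take hWv _, ball_take_subset hWv _ hWx⟩, ?_, ?_⟩
      · rw [List.length_take, hWl]; omega
      · rw [List.prefix_iff_eq_take] at hWp ⊢
        rw [List.take_take]
        rw [min_eq_left (by omega : V.length ≤ V.length + n₀)]
        exact hWp
    have step : ∀ V, Good V → ∃ i, i < B.numChildren V ∧ Good (V ++ [i]) := by
      intro V hV
      by_contra hstep
      push_neg at hstep
      have hbound : ∀ i : Fin (B.numChildren V), ∃ n₀,
          ¬ ∃ W, Fat W ∧ W.length = (V ++ [i.1]).length + n₀ ∧ (V ++ [i.1]) <+: W := by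
        intro i
        have hni := hstep i.1 i.2
        simp only [hGood] at hni
        push_neg at hni
        obtain ⟨n₀, hn₀⟩ := hni
        exact ⟨n₀, by push_neg; exact hn₀⟩
      choose g hg using hbound
      haveI : Nonempty (Fin (B.numChildren V)) := Fin.pos_iff_nonempty.1 (B.numChildren_pos V)
      obtain ⟨N, hN⟩ : ∃ N, ∀ i : Fin (B.numChildren V), g i ≤ N :=
        ⟨Finset.univ.sup g, fun i => Finset.le_sup (Finset.mem_univ i)⟩
      obtain ⟨W, hWf, hWl, hWp⟩ := hV (N + 1)
      have hVlen : V.length < W.length := by omega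
      set i : ℕ := W.get ⟨V.length, hVlen⟩ with hi
      have hWtakeV : W.take V.length = V := (List.prefix_iff_eq_take.1 hWp).symm
      have hilt : i < B.numChildren V := by
        have := hWf.1 ⟨V.length, hVlen⟩
        rwa [hWtakeV] at this
      have hpre : (V ++ [i]) <+: W := by
        rw [List.prefix_iff_eq_take]
        have hlen1 : (V ++ [i]).length = V.length + 1 := by simp
        rw [hlen1, List.take_succ, hWtakeV]
        congr 1
        simp [List.getElem?_eq_getElem hVlen, hi, List.get_eq_getElem]
      exact mono (V ++ [i]) (g ⟨i, hilt⟩) (hg ⟨i, hilt⟩) N (hN ⟨i, hilt⟩)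
        ⟨W, hWf, by simp [hWl]; omega, hpre⟩
    choose gi hgi1 hgi2 using step
    let Vseq : ℕ → {V : List ℕ // Good V} := fun n =>
      Nat.rec (motive := fun _ => {V : List ℕ // Good V}) ⟨[], good_nil⟩
        (fun _ p => ⟨p.1 ++ [gi p.1 p.2], hgi2 p.1 p.2⟩) n
    set ωb : ℕ → ℕ := fun n => gi (Vseq n).1 (Vseq n).2 with hωb
    have hVsucc : ∀ n, (Vseq (n + 1)).1 = (Vseq n).1 ++ [ωb n] := fun n => rfl
    have hVofFn : ∀ n, (Vseq n).1 = List.ofFn (fun k : Fin n => ωb k) := by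
      intro n
      induction n with
      | zero => rfl
      | succ n ih =>
        rw [hVsucc, ih, List.ofFn_succ']
        simp [List.concat_eq_append]
    have hrad : ∀ n, t ≤ B.radius (List.ofFn (fun k : Fin n => ωb k)) := by
      intro n
      rw [← hVofFn]
      have hfat := good_fat _ (Vseq n).2
      exact hkey _ hfat.1 hfat.2
    have htend := B.radius_tendsto ωb
    have hle : t ≤ 0 := ge_of_tendsto' htend hrad
    linarith
  obtain ⟨W, hWv, hWx, hWr⟩ := key
  have hP : ∃ k, B.radius (W.take k) < t := ⟨W.length, by rwa [List.take_length]⟩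
  set k₀ := Nat.find hP with hk₀
  have hPk₀ : B.radius (W.take k₀) < t := Nat.find_spec hP
  have hk₀pos : 0 < k₀ := by
    rcases Nat.eq_zero_or_pos k₀ with h | h
    · exfalso
      rw [h] at hPk₀
      simp only [List.take_zero] at hPk₀
      linarith
    · exact h
  have hlt : k₀ - 1 < W.length := by
    by_contra hge
    push_neg at hge
    have h1 : W.take (k₀ - 1) = W := List.take_of_length_le hge
    have := Nat.find_min hP (show k₀ - 1 < k₀ by omega)
    rw [h1] at this
    exact this hWr
  have hprev : ¬ B.radius (W.take (k₀ - 1)) < t := Nat.find_min hP (by omega)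
  have hJj : W.take k₀ = W.take (k₀ - 1) ++ [W.get ⟨k₀ - 1, hlt⟩] := by
    have hk : k₀ = (k₀ - 1) + 1 := by omega
    conv_lhs => rw [hk]
    rw [List.take_succ]
    congr 1
    simp [List.getElem?_eq_getElem hlt, List.get_eq_getElem]
  refine ⟨W.take (k₀ - 1), W.get ⟨k₀ - 1, hlt⟩, valid_take hWv _,
    ?_, ball_take_subset hWv _ hWx, ?_, not_lt.1 hprev, ?_⟩
  · exact hWv ⟨k₀ - 1, hlt⟩
  · rw [← hJj]
    exact ball_take_subset hWv _ hWx
  · rw [← hJj]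
    exact hPk₀


theorem core_step [Nontrivial E] {Ba Bb : BallSystem E} {Ca Cb : Set E} {r : ℝ}
    (hCa : IsCompact Ca) (hCb : IsCompact Cb) (hCbne : Cb.Nonempty)
    (hBa : Ba.IsSystemFor Ca)
    (hUb : Bb.UniformlyDense r) (hr0 : 0 < r) (hr2 : r < 1/2)
    (hprod : ∀ I L, Ba.valid I → Bb.valid L →
      Ba.h Ca I * Bb.h Cb L ≤ (1 - 2*r)^2 * (Ba.minChildRadius I * Bb.minChildRadius L))
    (hroot : r * Bb.radius [] ≤ Ba.radius [])
    {L : List ℕ} {x : E} (hL : Bb.valid L) (hxa : x ∈ Ca)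
    (hdeep : dist x (Bb.center L) ≤ (1 - 2*r) * Bb.radius L) :
    (∃ L' y, Bb.valid L' ∧ y ∈ Ca ∧ dist y (Bb.center L') ≤ (1 - 2*r) * Bb.radius L' ∧
        Bb.radius L' ≤ r * Bb.radius L) ∨
    (∃ M w, Ba.valid M ∧ w ∈ Cb ∧ dist w (Ba.center M) ≤ (1 - 2*r) * Ba.radius M ∧
        Ba.radius M ≤ r * Bb.radius L) := by
  have hρ₂ : 0 < Bb.radius L := Bb.radius_pos L
  have hK : 0 < 1 - 2*r := by linarith
  have ht : 0 < r * Bb.radius L := by positivity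
  have hρroot : Bb.radius L ≤ Bb.radius [] := radius_le_root hL
  have htroot : r * Bb.radius L ≤ Ba.radius [] := by nlinarith
  obtain ⟨J, j, hJv, hjlt, hxJ, hxJ', hJrad, hJ'rad⟩ := exists_jump hBa hxa ht htroot
  by_cases hcase : Ba.h Ca J ≤ (1 - 2*r) * Bb.minChildRadius L
  · obtain ⟨z, hzsub, hzx⟩ := slide (Ba.radius_pos J) ht.le hJrad hxJ
    have hzb : Metric.closedBall z (r * Bb.radius L) ⊆ Bb.ball L := by
      show Metric.closedBall z (r * Bb.radius L) ⊆
        Metric.closedBall (Bb.center L) (Bb.radius L)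
      apply Metric.closedBall_subset_closedBall'
      have h1 : dist z (Bb.center L) ≤ dist z x + dist x (Bb.center L) := dist_triangle _ _ _
      linarith
    obtain ⟨i, hilt, hisub⟩ := hUb L hL z (r * Bb.radius L) hzb (le_refl _)
    have hL'v : Bb.valid (L ++ [i]) := valid_append hL hilt
    have hc'mem : Bb.center (L ++ [i]) ∈ Ba.ball J :=
      hzsub (hisub (center_mem_ball Bb (L ++ [i])))
    obtain ⟨y, hyCa, hyd⟩ := exists_dist_le_h hCa ⟨x, hxa⟩ hc'mem
    have hm : Bb.minChildRadius L ≤ Bb.radius (L ++ [i]) := minChildRadius_le Bb hilt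
    have hrad' : Bb.radius (L ++ [i]) ≤ r * Bb.radius L :=
      radius_le_of_closedBall_subset hisub (Bb.radius_pos _).le
    left
    refine ⟨L ++ [i], y, hL'v, hyCa, ?_, hrad'⟩
    rw [dist_comm]
    calc dist (Bb.center (L ++ [i])) y ≤ Ba.h Ca J := hyd
      _ ≤ (1 - 2*r) * Bb.minChildRadius L := hcase
      _ ≤ (1 - 2*r) * Bb.radius (L ++ [i]) := by nlinarith
  · push_neg at hcase
    have hmb := minChildRadius_pos Bb L
    have hma := minChildRadius_pos Ba J
    have hb : Bb.h Cb L < (1 - 2*r) * Ba.minChildRadius J := by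
      by_contra hge
      push_neg at hge
      have hbpos : 0 < Bb.h Cb L :=
        lt_of_lt_of_le (by nlinarith) hge
      have h1 := hprod J L hJv hL
      have hx1 : (1 - 2*r) * Bb.minChildRadius L * Bb.h Cb L < Ba.h Ca J * Bb.h Cb L :=
        mul_lt_mul_of_pos_right hcase hbpos
      have hx2 : ((1 - 2*r) * Ba.minChildRadius J) * ((1 - 2*r) * Bb.minChildRadius L) ≤
          Bb.h Cb L * ((1 - 2*r) * Bb.minChildRadius L) :=
        mul_le_mul_of_nonneg_right hge (by positivity)
      nlinarith
    have hcplus : Ba.center (J ++ [j]) ∈ Bb.ball L := by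
      have h1 : dist x (Ba.center (J ++ [j])) ≤ Ba.radius (J ++ [j]) := mem_closedBall.1 hxJ'
      have h2 : dist (Ba.center (J ++ [j])) (Bb.center L) ≤
          dist (Ba.center (J ++ [j])) x + dist x (Bb.center L) := dist_triangle _ _ _
      rw [dist_comm (Ba.center (J ++ [j])) x] at h2
      show Ba.center (J ++ [j]) ∈ Metric.closedBall (Bb.center L) (Bb.radius L)
      rw [mem_closedBall]
      nlinarith
    obtain ⟨w, hwCb, hwd⟩ := exists_dist_le_h hCb hCbne hcplus
    right
    refine ⟨J ++ [j], w, valid_append hJv hjlt, hwCb, ?_, hJ'rad.le⟩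
    rw [dist_comm]
    calc dist (Ba.center (J ++ [j])) w ≤ Bb.h Cb L := hwd
      _ ≤ (1 - 2*r) * Ba.minChildRadius J := hb.le
      _ ≤ (1 - 2*r) * Ba.radius (J ++ [j]) := by
          have := minChildRadius_le Ba hjlt
          nlinarith


theorem prod_of_thickness {B₁ B₂ : BallSystem E} {C₁ C₂ : Set E} {r : ℝ}
    (hr0 : 0 < r) (hr2 : r < 1/2)
    (hτ : ENNReal.ofReal (1 / (1 - 2*r)^2) ≤ B₁.thickness C₁ * B₂.thickness C₂) :
    ∀ I L, B₁.valid I → B₂.valid L →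
      B₁.h C₁ I * B₂.h C₂ L ≤ (1 - 2*r)^2 * (B₁.minChildRadius I * B₂.minChildRadius L) := by
  intro I L hI hL
  have hK : 0 < 1 - 2*r := by linarith
  have hK2 : 0 < (1 - 2*r)^2 := by positivity
  have hma := minChildRadius_pos B₁ I
  have hmc := minChildRadius_pos B₂ L
  have h1nn := h_nonneg B₁ C₁ I
  have h2nn := h_nonneg B₂ C₂ L
  rcases eq_or_lt_of_le h1nn with hz | hpos1
  · rw [← hz, zero_mul]; positivity
  rcases eq_or_lt_of_le h2nn with hz | hpos2
  · rw [← hz, mul_zero]; positivity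
  set a := ENNReal.ofReal (B₁.minChildRadius I) with ha
  set b := ENNReal.ofReal (B₁.h C₁ I) with hbb
  set c := ENNReal.ofReal (B₂.minChildRadius L) with hc
  set d := ENNReal.ofReal (B₂.h C₂ L) with hd
  have key : ENNReal.ofReal (1 / (1 - 2*r)^2) ≤ (a / b) * (c / d) := by
    refine le_trans hτ (mul_le_mul' ?_ ?_)
    · exact iInf_le _ (⟨I, hI⟩ : {I : List ℕ // B₁.valid I})
    · exact iInf_le _ (⟨L, hL⟩ : {L : List ℕ // B₂.valid L})
  have hb0 : b ≠ 0 := by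
    rw [hbb, Ne, ENNReal.ofReal_eq_zero]; linarith
  have hbt : b ≠ ⊤ := ENNReal.ofReal_ne_top
  have hd0 : d ≠ 0 := by
    rw [hd, Ne, ENNReal.ofReal_eq_zero]; linarith
  have hdt : d ≠ ⊤ := ENNReal.ofReal_ne_top
  have key2 : ENNReal.ofReal (1 / (1 - 2*r)^2) * (b * d) ≤ a * c := by
    refine le_trans (mul_le_mul_left key (b * d)) (le_of_eq ?_)
    rw [div_eq_mul_inv, div_eq_mul_inv]
    have e : a * b⁻¹ * (c * d⁻¹) * (b * d) = a * c * (b⁻¹ * b) * (d⁻¹ * d) := by ring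
    rw [e, ENNReal.inv_mul_cancel hb0 hbt, ENNReal.inv_mul_cancel hd0 hdt, mul_one, mul_one]
  have ebd : b * d = ENNReal.ofReal (B₁.h C₁ I * B₂.h C₂ L) := by
    rw [hbb, hd, ← ENNReal.ofReal_mul h1nn]
  have eac : a * c = ENNReal.ofReal (B₁.minChildRadius I * B₂.minChildRadius L) := by
    rw [ha, hc, ← ENNReal.ofReal_mul hma.le]
  rw [ebd, eac, ← ENNReal.ofReal_mul (by positivity : (0:ℝ) ≤ 1 / (1 - 2*r)^2)] at key2
  rw [ENNReal.ofReal_le_ofReal_iff (by positivity)] at key2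
  have hfin := mul_le_mul_of_nonneg_left key2 hK2.le
  calc B₁.h C₁ I * B₂.h C₂ L
      = (1 - 2*r)^2 * (1 / (1 - 2*r)^2 * (B₁.h C₁ I * B₂.h C₂ L)) := by
        field_simp
    _ ≤ (1 - 2*r)^2 * (B₁.minChildRadius I * B₂.minChildRadius L) := hfin


end BallSystem


end AuxGapLemma

/-- **Gap Lemma.** Let `C₁`, `C₂` be compact sets in `ℝ^d` (a finite
dimensional real normed space) with systems of balls `B₁`, `B₂`, and `r ∈ (0, 1/2)`.
If (i) `τ(C₁)·τ(C₂) ≥ 1/(1-2r)²`, (ii) `C₁` meets `(1-2r)S²_∅`, (iii) the root radii are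
comparable (`rad S¹_∅ ≥ r·rad S²_∅` and `rad S²_∅ ≥ r·rad S¹_∅`), and (iv) both systems
are `r`-uniformly dense, then `C₁ ∩ C₂ ≠ ∅`. -/
theorem gap_lemma {E : Type*} [NormedAddCommGroup E] [NormedSpace ℝ E]
    [FiniteDimensional ℝ E]
    (C₁ C₂ : Set E) (hC₁ : IsCompact C₁) (hC₂ : IsCompact C₂)
    (B₁ B₂ : BallSystem E) (hB₁ : B₁.IsSystemFor C₁) (hB₂ : B₂.IsSystemFor C₂)
    (r : ℝ) (hr : r ∈ Set.Ioo (0 : ℝ) (1/2))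
    (hτ : ENNReal.ofReal (1 / (1 - 2*r)^2) ≤ B₁.thickness C₁ * B₂.thickness C₂)
    (h0 : (C₁ ∩ Metric.closedBall (B₂.center []) ((1 - 2*r) * B₂.radius [])).Nonempty)
    (h0b₁ : r * B₂.radius [] ≤ B₁.radius [])
    (h0b₂ : r * B₁.radius [] ≤ B₂.radius [])
    (hU₁ : B₁.UniformlyDense r) (hU₂ : B₂.UniformlyDense r) :
    (C₁ ∩ C₂).Nonempty := by
  obtain ⟨hr0, hr2⟩ := hr
  have hK : 0 < 1 - 2*r := by linarith
  haveI : CompleteSpace E := FiniteDimensional.complete ℝ E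
  obtain ⟨x₀, hx₀C, hx₀d⟩ := h0
  obtain ⟨q₂, hq₂C, -⟩ := BallSystem.exists_mem_inter_ball hB₂ (B₂.valid_nil)
  rcases subsingleton_or_nontrivial E with hE | hE
  · exact ⟨x₀, hx₀C, (Subsingleton.elim q₂ x₀) ▸ hq₂C⟩
  have hC₂ne : C₂.Nonempty := ⟨q₂, hq₂C⟩
  have hC₁ne : C₁.Nonempty := ⟨x₀, hx₀C⟩
  have hmem : x₀ ∈ Metric.closedBall (B₂.center []) ((1 - 2*r) * B₂.radius []) := hx₀d
  have hx₀d' : dist x₀ (B₂.center []) ≤ (1 - 2*r) * B₂.radius [] := Metric.mem_closedBall.1 hmem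
  have hprod := BallSystem.prod_of_thickness hr0 hr2 hτ
  have hprod' : ∀ L I, B₂.valid L → B₁.valid I →
      B₂.h C₂ L * B₁.h C₁ I ≤ (1 - 2*r)^2 * (B₂.minChildRadius L * B₁.minChildRadius I) := by
    intro L I hL hI
    have h := hprod I L hI hL
    nlinarith [h]
  have main : ∀ n : ℕ,
      (∃ L y, B₂.valid L ∧ y ∈ C₁ ∧ dist y (B₂.center L) ≤ (1 - 2*r) * B₂.radius L ∧
        B₂.radius L ≤ r^n * B₂.radius []) ∨
      (∃ M w, B₁.valid M ∧ w ∈ C₂ ∧ dist w (B₁.center M) ≤ (1 - 2*r) * B₁.radius M ∧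
        B₁.radius M ≤ r^n * B₂.radius []) := by
    intro n
    induction n with
    | zero =>
      left
      exact ⟨[], x₀, B₂.valid_nil, hx₀C, hx₀d', by simp⟩
    | succ n ih =>
      rcases ih with ⟨L, y, hL, hy, hd, hρ⟩ | ⟨M, w, hM, hw, hd, hρ⟩
      · rcases BallSystem.core_step hC₁ hC₂ hC₂ne hB₁ hU₂ hr0 hr2 hprod h0b₁ hL hy hd with
          ⟨L', y', h1, h2, h3, h4⟩ | ⟨M', w', h1, h2, h3, h4⟩
        · left
          refine ⟨L', y', h1, h2, h3, ?_⟩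
          calc B₂.radius L' ≤ r * B₂.radius L := h4
            _ ≤ r * (r^n * B₂.radius []) := by nlinarith
            _ = r^(n+1) * B₂.radius [] := by ring
        · right
          refine ⟨M', w', h1, h2, h3, ?_⟩
          calc B₁.radius M' ≤ r * B₂.radius L := h4
            _ ≤ r * (r^n * B₂.radius []) := by nlinarith
            _ = r^(n+1) * B₂.radius [] := by ring
      · rcases BallSystem.core_step hC₂ hC₁ hC₁ne hB₂ hU₁ hr0 hr2 hprod' h0b₂ hM hw hd with
          ⟨M', w', h1, h2, h3, h4⟩ | ⟨L', y', h1, h2, h3, h4⟩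
        · right
          refine ⟨M', w', h1, h2, h3, ?_⟩
          calc B₁.radius M' ≤ r * B₁.radius M := h4
            _ ≤ r * (r^n * B₂.radius []) := by nlinarith
            _ = r^(n+1) * B₂.radius [] := by ring
        · left
          refine ⟨L', y', h1, h2, h3, ?_⟩
          calc B₂.radius L' ≤ r * B₁.radius M := h4
            _ ≤ r * (r^n * B₂.radius []) := by nlinarith
            _ = r^(n+1) * B₂.radius [] := by ring
  have pairs : ∀ n : ℕ, ∃ p ∈ C₁, ∃ q ∈ C₂, dist p q ≤ 2 * (r^n * B₂.radius []) := by
    intro n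
    rcases main n with ⟨L, y, hL, hy, hd, hρ⟩ | ⟨M, w, hM, hw, hd, hρ⟩
    · obtain ⟨q, hqC, hqb⟩ := BallSystem.exists_mem_inter_ball hB₂ hL
      refine ⟨y, hy, q, hqC, ?_⟩
      have h1 : dist q (B₂.center L) ≤ B₂.radius L := Metric.mem_closedBall.1 hqb
      have h2 : dist y q ≤ dist y (B₂.center L) + dist q (B₂.center L) :=
        dist_triangle_right _ _ _
      have h3 : 0 < B₂.radius L := B₂.radius_pos L
      nlinarith
    · obtain ⟨p, hpC, hpb⟩ := BallSystem.exists_mem_inter_ball hB₁ hM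
      refine ⟨p, hpC, w, hw, ?_⟩
      have h1 : dist p (B₁.center M) ≤ B₁.radius M := Metric.mem_closedBall.1 hpb
      have h2 : dist p w ≤ dist p (B₁.center M) + dist w (B₁.center M) :=
        dist_triangle_right _ _ _
      have h3 : 0 < B₁.radius M := B₁.radius_pos M
      nlinarith
  choose p hp q hq hpq using pairs
  obtain ⟨a, haC₁, φ, hφ, hconv⟩ := hC₁.tendsto_subseq hp
  have haC₂ : a ∈ C₂ := by
    rw [IsClosed.mem_iff_infDist_zero hC₂.isClosed hC₂ne]
    refine le_antisymm ?_ Metric.infDist_nonneg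
    have hbound : ∀ n : ℕ,
        infDist a C₂ ≤ dist a (p (φ n)) + 2 * (r^(φ n) * B₂.radius []) := by
      intro n
      calc infDist a C₂ ≤ infDist (p (φ n)) C₂ + dist a (p (φ n)) :=
            Metric.infDist_le_infDist_add_dist
        _ ≤ dist (p (φ n)) (q (φ n)) + dist a (p (φ n)) := by
            have := Metric.infDist_le_dist_of_mem (x := p (φ n)) (hq (φ n))
            linarith
        _ ≤ dist a (p (φ n)) + 2 * (r^(φ n) * B₂.radius []) := by
            have := hpq (φ n)
            linarith
    have htend : Filter.Tendsto (fun n => dist a (p (φ n)) + 2 * (r^(φ n) * B₂.radius []))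
        Filter.atTop (nhds 0) := by
      have t1 : Filter.Tendsto (fun n => dist a (p (φ n))) Filter.atTop (nhds 0) := by
        have h := tendsto_iff_dist_tendsto_zero.1 hconv
        simpa [Function.comp, dist_comm] using h
      have t2 : Filter.Tendsto (fun n => 2 * (r^(φ n) * B₂.radius []))
          Filter.atTop (nhds 0) := by
        have hbase : Filter.Tendsto (fun n : ℕ => r^n) Filter.atTop (nhds 0) :=
          tendsto_pow_atTop_nhds_zero_of_lt_one hr0.le (by linarith)
        have hcomp : Filter.Tendsto (fun n => r^(φ n)) Filter.atTop (nhds 0) :=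
          hbase.comp (hφ.tendsto_atTop)
        have := (hcomp.mul_const (B₂.radius [])).const_mul (2 : ℝ)
        simpa using this
      simpa using t1.add t2
    exact ge_of_tendsto' htend hbound
  exact ⟨a, haC₁, haC₂⟩
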